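/- If there exists a Hadamard matrix of order n ≥ 8, then there exists a pair of weakly unbiased Hadamard matrices H, K of order n with σ(H,K) = {2, n−2}. Concretely, if H is a Hadamard matrix of order n and K is obtained from H by negating its first column, then every entry of HKᵀ has absolute value 2 or n−2, and all entries are ≡ 2 (mod 4). -/

import Mathlib

open Matrix

/-- A Hadamard matrix with integer entries: entries `±1` and `H * Hᵀ = n • 1`. -/
def IsHadamardMatrixZ {n : ℕ} (H : Matrix (Fin n) (Fin n) ℤ) : Prop :=
  (∀ i j, H i j = 1 ∨ H i j = -1) ∧ H * Hᵀ = (n : ℤ) • 1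

theorem stmt_16 (n : ℕ) (hn : 8 ≤ n)
    (H K : Matrix (Fin n) (Fin n) ℤ) (hH : IsHadamardMatrixZ H)
    (hK : ∀ i j, K i j = if (j : ℕ) = 0 then -H i j else H i j) :
    IsHadamardMatrixZ K ∧
      (∀ i j, (H * Kᵀ) i j ≡ 2 [ZMOD 4]) ∧
      (∀ i j, |(H * Kᵀ) i j| = 2 ∨ |(H * Kᵀ) i j| = (n : ℤ) - 2) ∧
      (∃ i j, |(H * Kᵀ) i j| = 2) ∧ (∃ i j, |(H * Kᵀ) i j| = (n : ℤ) - 2) := by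
  obtain ⟨h1, h2⟩ := hH
  have hn0 : 0 < n := by omega
  set z : Fin n := ⟨0, hn0⟩ with hz
  have horth : ∀ i j, ∑ k, H i k * H j k = if i = j then (n:ℤ) else 0 := by
    intro i j
    have := congrFun (congrFun h2 i) j
    simpa [mul_apply, Matrix.smul_apply, one_apply, mul_ite] using this
  have hKH : ∀ i j, K i j = if j = z then -H i j else H i j := by
    intro i j
    rw [hK]
    congr 1
    simp [hz, Fin.ext_iff]
  have hentry : ∀ i j, (H * Kᵀ) i j = (if i = j then (n:ℤ) else 0) - 2 * (H i z * H j z) := by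
    intro i j
    rw [mul_apply, ← horth i j]
    have step : ∀ k, H i k * Kᵀ k j
        = H i k * H j k - (if k = z then 2 * (H i z * H j z) else 0) := by
      intro k
      rw [transpose_apply, hKH]
      by_cases hk : k = z
      · subst hk; simp; ring
      · simp [hk]
    rw [Finset.sum_congr rfl (fun k _ => step k), Finset.sum_sub_distrib,
      Finset.sum_ite_eq' Finset.univ z]
    simp
  have hdvd : (4:ℤ) ∣ (n:ℤ) := by
    set a : Fin n := ⟨0, by omega⟩ with ha
    set b : Fin n := ⟨1, by omega⟩ with hb
    set c : Fin n := ⟨2, by omega⟩ with hc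
    have hab : a ≠ b := by simp [ha, hb, Fin.ext_iff]
    have hac : a ≠ c := by simp [ha, hc, Fin.ext_iff]
    have hbc : b ≠ c := by simp [hb, hc, Fin.ext_iff]
    have hs : ∑ k, (H a k + H b k) * (H a k + H c k) = (n:ℤ) := by
      have expand : ∀ k, (H a k + H b k) * (H a k + H c k)
          = H a k * H a k + H a k * H c k + (H b k * H a k + H b k * H c k) := fun k => by ring
      rw [Finset.sum_congr rfl (fun k _ => expand k), Finset.sum_add_distrib,
        Finset.sum_add_distrib, Finset.sum_add_distrib, horth, horth, horth, horth]
      simp [hab, hac, hbc, Ne.symm hab]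
    have hterm : ∀ k, (4:ℤ) ∣ (H a k + H b k) * (H a k + H c k) := by
      intro k
      rcases h1 a k with h | h <;> rcases h1 b k with h' | h' <;>
        rcases h1 c k with h'' | h'' <;> rw [h, h', h''] <;> norm_num
    exact hs ▸ Finset.dvd_sum (fun k _ => hterm k)
  refine ⟨⟨?_, ?_⟩, ?_, ?_, ?_, ?_⟩
  · intro i j
    rcases h1 i j with h | h <;> by_cases hj : (j : ℕ) = 0 <;> simp [hK, hj, h]
  · have : K * Kᵀ = H * Hᵀ := by
      ext i j
      rw [mul_apply, mul_apply]
      refine Finset.sum_congr rfl (fun k _ => ?_)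
      rw [transpose_apply, transpose_apply, hKH, hKH]
      by_cases hk : k = z <;> simp [hk] <;> ring
    rw [this, h2]
  · intro i j
    rw [hentry i j]
    rcases h1 i z with h | h <;> rcases h1 j z with h' | h' <;> rw [h, h'] <;>
      by_cases hij : i = j <;> simp only [hij, if_true, if_false, if_pos, if_neg] <;>
      first
      | (obtain ⟨m, hm⟩ := hdvd
         rw [Int.ModEq]
         omega)
      | (simp [hij]; decide)
  · intro i j
    rw [hentry i j]
    by_cases hij : i = j
    · subst hij
      right
      have hsq : H i z * H i z = 1 := by rcases h1 i z with h | h <;> rw [h] <;> norm_num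
      rw [if_pos rfl, hsq, mul_one, abs_of_nonneg (by omega)]
    · left
      rcases h1 i z with h | h <;> rcases h1 j z with h' | h' <;>
        simp [hij, h, h']
  · refine ⟨z, ⟨1, by omega⟩, ?_⟩
    rw [hentry]
    have hne : z ≠ (⟨1, by omega⟩ : Fin n) := by simp [hz, Fin.ext_iff]
    rcases h1 z z with h | h <;> rcases h1 ⟨1, by omega⟩ z with h' | h' <;>
      simp [hne, h, h']
  · refine ⟨z, z, ?_⟩
    rw [hentry, if_pos rfl]
    have hsq : H z z * H z z = 1 := by rcases h1 z z with h | h <;> rw [h] <;> norm_num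
    rw [hsq, mul_one, abs_of_nonneg (by omega)]
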